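/- Let 𝓛 = {L_1,…,L_k} be a lumping of the Insect Markov chain on X^n. Then there exists a subgroup K of the group of all permutations g of X^n satisfying d(gx, gy) = d(x,y) for all x, y ∈ X^n (the automorphism group of the rooted q-ary tree of depth n acting on its boundary), such that the orbits of K on X^n are exactly the parts L_1,…,L_k of 𝓛. -/

import Mathlib

open scoped Classical

/-- The ultrametric distance on `X^n`:
`d(x,y) = n − max{m ∈ {0,…,n} : x 0 = y 0, …, x (m-1) = y (m-1)}`. -/
noncomputable def treeDist {X : Type*} {n : ℕ} (x y : Fin n → X) : ℕ :=
  n - ((Finset.range (n + 1)).filter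
        (fun m => ∀ i : Fin n, (i : ℕ) < m → x i = y i)).sup id

/-- The coefficients of the Insect Markov chain on the `q`-ary rooted tree of depth `n`:
`α_0 = 1`, `α_j = (q^j − 1)/(q^{j+1} − 1)` for `1 ≤ j ≤ n−1`, and `α_n = 0`. -/
noncomputable def insectAlpha (q n : ℕ) (j : ℕ) : ℝ :=
  if j = 0 then 1
  else if j ≤ n - 1 then ((q : ℝ) ^ j - 1) / ((q : ℝ) ^ (j + 1) - 1)
  else 0

/-- The transition probabilities of the Insect Markov chain on `X^n` (`q = |X|`):
`p(x,y) = ∑_{i = max(d(x,y),1)}^{n} q^{−i} · α_1⋯α_{i−1} · (1 − α_i)`. -/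
noncomputable def insectP {X : Type*} [Fintype X] {n : ℕ} (x y : Fin n → X) : ℝ :=
  ∑ i ∈ Finset.Icc (max (treeDist x y) 1) n,
    (1 / (Fintype.card X : ℝ) ^ i)
      * (∏ t ∈ Finset.Ico 1 i, insectAlpha (Fintype.card X) n t)
      * (1 - insectAlpha (Fintype.card X) n i)

namespace Stmt15

variable {X : Type*} {n : ℕ}

/-- agreement on the first `m` coordinates -/
def Agr (m : ℕ) (x y : Fin n → X) : Prop := ∀ i : Fin n, (i : ℕ) < m → x i = y i

lemma Agr.refl (m : ℕ) (x : Fin n → X) : Agr m x x := fun _ _ => rfl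

lemma Agr.symm {m : ℕ} {x y : Fin n → X} (h : Agr m x y) : Agr m y x :=
  fun i hi => (h i hi).symm

lemma Agr.trans {m : ℕ} {x y z : Fin n → X} (h : Agr m x y) (h' : Agr m y z) : Agr m x z :=
  fun i hi => (h i hi).trans (h' i hi)

lemma Agr.mono {m m' : ℕ} (hm : m' ≤ m) {x y : Fin n → X} (h : Agr m x y) : Agr m' x y :=
  fun i hi => h i (lt_of_lt_of_le hi hm)

lemma agr_n_iff {x y : Fin n → X} : Agr n x y ↔ x = y := by
  constructor
  · intro h; funext i; exact h i i.isLt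
  · rintro rfl; exact Agr.refl n x

lemma agr_zero (x y : Fin n → X) : Agr 0 x y := fun i hi => absurd hi (Nat.not_lt_zero _)

lemma treeDist_le_iff {x y : Fin n → X} {j : ℕ} (hj : j ≤ n) :
    treeDist x y ≤ j ↔ Agr (n - j) x y := by
  classical
  set S := (Finset.range (n + 1)).filter
      (fun m => ∀ i : Fin n, (i : ℕ) < m → x i = y i) with hS
  have h0 : (0 : ℕ) ∈ S := by
    refine Finset.mem_filter.2 ⟨Finset.mem_range.2 (by omega), fun i hi => absurd hi (by omega)⟩
  have hSn : ∀ m ∈ S, m ≤ n := by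
    intro m hm
    have := (Finset.mem_filter.1 hm).1
    exact Nat.lt_succ_iff.mp (Finset.mem_range.1 this)
  constructor
  · intro h
    obtain ⟨b, hb, hbs⟩ := Finset.exists_mem_eq_sup S ⟨0, h0⟩ id
    have hagr : Agr b x y := (Finset.mem_filter.1 hb).2
    have hsup : S.sup id = b := hbs
    have hble : n - j ≤ b := by
      have ht : treeDist x y = n - S.sup id := rfl
      have hbn : b ≤ n := hSn b hb
      rw [ht, hsup] at h
      omega
    exact hagr.mono hble
  · intro h
    have hmem : n - j ∈ S := by
      refine Finset.mem_filter.2 ⟨Finset.mem_range.2 (by omega), ?_⟩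
      exact fun i hi => h i hi
    have h1 : n - j ≤ S.sup id := Finset.le_sup (f := id) hmem
    have h2 : treeDist x y = n - S.sup id := rfl
    omega

lemma treeDist_self (x : Fin n → X) : treeDist x x = 0 := by
  have := (treeDist_le_iff (x := x) (y := x) (j := 0) (Nat.zero_le n)).2
  simpa using this (Agr.refl _ _)

lemma treeDist_le_n (x y : Fin n → X) : treeDist x y ≤ n := Nat.sub_le _ _

lemma treeDist_symm (x y : Fin n → X) : treeDist x y = treeDist y x := by
  unfold treeDist
  congr 1
  apply congrArg (fun (s : Finset ℕ) => s.sup id)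
  apply Finset.filter_congr
  intro m _
  constructor
  · intro h i hi; exact (h i hi).symm
  · intro h i hi; exact (h i hi).symm

lemma treeDist_eq_split {x y : Fin n → X} {m : ℕ} (hm : m < n)
    (h : Agr m x y) (hne : x ⟨m, hm⟩ ≠ y ⟨m, hm⟩) : treeDist x y = n - m := by
  have h1 : treeDist x y ≤ n - m := by
    rw [treeDist_le_iff (by omega)]
    have : n - (n - m) = m := by omega
    rw [this]; exact h
  have h2 : ¬ treeDist x y ≤ n - m - 1 := by
    rw [treeDist_le_iff (by omega)]
    have : n - (n - m - 1) = m + 1 := by omega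
    rw [this]
    intro hagr
    exact hne (hagr ⟨m, hm⟩ (by simp))
  omega


section Balls
variable [Fintype X]

/-- the ball of all points agreeing with `x` on the first `m` coordinates -/
noncomputable def ballm (m : ℕ) (x : Fin n → X) : Finset (Fin n → X) :=
  Finset.univ.filter (fun y => Agr m x y)

lemma mem_ballm {m : ℕ} {x y : Fin n → X} : y ∈ ballm m x ↔ Agr m x y := by
  simp [ballm]

lemma self_mem_ballm (m : ℕ) (x : Fin n → X) : x ∈ ballm m x :=
  mem_ballm.2 (Agr.refl m x)

lemma ballm_congr {m : ℕ} {x u : Fin n → X} (h : Agr m x u) : ballm m x = ballm m u := by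
  ext y
  simp only [mem_ballm]
  exact ⟨fun h' => h.symm.trans h', fun h' => h.trans h'⟩

lemma ballm_n (x : Fin n → X) : ballm n x = {x} := by
  ext y
  simp only [mem_ballm, Finset.mem_singleton, agr_n_iff]
  exact ⟨fun h => h.symm, fun h => h.symm⟩

lemma card_ballm {m : ℕ} (hm : m ≤ n) (x : Fin n → X) :
    (ballm m x).card = Fintype.card X ^ (n - m) := by
  classical
  have e : {i : Fin n // m ≤ (i : ℕ)} ≃ Fin (n - m) :=
    { toFun := fun i => ⟨(i.1 : ℕ) - m, by have h1 := i.2; have h2 := i.1.isLt; omega⟩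
      invFun := fun j => ⟨⟨(j : ℕ) + m, by have := j.isLt; omega⟩, by simp⟩
      left_inv := fun i => by
        rcases i with ⟨⟨iv, hiv⟩, hi⟩
        simp only at hi ⊢
        ext
        simp only [Fin.val_mk]
        omega
      right_inv := fun j => by
        rcases j with ⟨jv, hjv⟩
        ext
        simp only [Fin.val_mk]
        omega }
  have hcard : Fintype.card ({i : Fin n // m ≤ (i : ℕ)} → X) = Fintype.card X ^ (n - m) := by
    rw [Fintype.card_fun]
    congr 1
    rw [Fintype.card_congr e, Fintype.card_fin]
  rw [← hcard]
  rw [← Fintype.card_coe]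
  apply Fintype.card_congr
  refine
    { toFun := fun y => fun i => (y : Fin n → X) i.1
      invFun := fun g => ⟨fun i => if h : (i : ℕ) < m then x i else g ⟨i, by omega⟩, ?_⟩
      left_inv := ?_
      right_inv := ?_ }
  · rw [mem_ballm]
    intro i hi
    simp [hi]
  · rintro ⟨y, hy⟩
    rw [mem_ballm] at hy
    ext i
    by_cases h : (i : ℕ) < m
    · simp [h, (hy i h).symm]
    · simp [h]
  · intro g
    funext i
    rcases i with ⟨i, hi⟩
    have h : ¬ ((i : ℕ) < m) := by omega
    simp [h]

end Balls


section Operators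
variable [Fintype X]

/-- unnormalized ball-sum operator -/
noncomputable def Tb (m : ℕ) (v : (Fin n → X) → ℝ) (x : Fin n → X) : ℝ :=
  ∑ y ∈ ballm m x, v y

lemma Tb_n (v : (Fin n → X) → ℝ) (x : Fin n → X) : Tb n v x = v x := by
  rw [Tb, ballm_n, Finset.sum_singleton]

lemma Tb_smul (m : ℕ) (a : ℝ) (v : (Fin n → X) → ℝ) (x : Fin n → X) :
    Tb m (fun y => a * v y) x = a * Tb m v x := by
  rw [Tb, Tb, Finset.mul_sum]

lemma Tb_comp {m m' : ℕ} (hm : m ≤ n) (hm' : m' ≤ n) (v : (Fin n → X) → ℝ) (x : Fin n → X) :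
    Tb m (Tb m' v) x = (Fintype.card X : ℝ) ^ (n - max m m') * Tb (min m m') v x := by
  classical
  have key : ∀ z : Fin n → X,
      ((ballm m x).filter (fun y => Agr m' y z)).card
        = if Agr (min m m') x z then Fintype.card X ^ (n - max m m') else 0 := by
    intro z
    by_cases hz : Agr (min m m') x z
    · rw [if_pos hz]
      rcases le_total m m' with hle | hle
      · have hmin : min m m' = m := min_eq_left hle
        have hmax : max m m' = m' := max_eq_right hle
        rw [hmin] at hz
        have hset : (ballm m x).filter (fun y => Agr m' y z) = ballm m' z := by
          ext y
          simp only [Finset.mem_filter, mem_ballm]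
          constructor
          · rintro ⟨_, h2⟩; exact h2.symm
          · intro h
            exact ⟨hz.trans (h.mono hle), h.symm⟩
        rw [hset, hmax, card_ballm hm' z]
      · have hmin : min m m' = m' := min_eq_right hle
        have hmax : max m m' = m := max_eq_left hle
        rw [hmin] at hz
        have hset : (ballm m x).filter (fun y => Agr m' y z) = ballm m x := by
          apply Finset.filter_true_of_mem
          intro y hy
          rw [mem_ballm] at hy
          exact ((hy.mono hle).symm.trans hz)
        rw [hset, hmax, card_ballm hm x]
    · rw [if_neg hz]
      rw [Finset.card_eq_zero]
      rw [Finset.filter_eq_empty_iff]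
      intro y hy
      rw [mem_ballm] at hy
      intro hcon
      exact hz (((hy.mono (min_le_left m m')).trans (hcon.mono (min_le_right m m'))))
  calc Tb m (Tb m' v) x = ∑ y ∈ ballm m x, ∑ z ∈ Finset.univ, if Agr m' y z then v z else 0 := by
        apply Finset.sum_congr rfl
        intro y _
        rw [Tb, ballm, Finset.sum_filter]
    _ = ∑ z ∈ Finset.univ, ∑ y ∈ ballm m x, if Agr m' y z then v z else 0 := Finset.sum_comm
    _ = ∑ z ∈ Finset.univ, (((ballm m x).filter (fun y => Agr m' y z)).card : ℝ) * v z := by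
        apply Finset.sum_congr rfl
        intro z _
        rw [← Finset.sum_filter, Finset.sum_const, nsmul_eq_mul]
    _ = ∑ z ∈ Finset.univ, (if Agr (min m m') x z then ((Fintype.card X : ℝ) ^ (n - max m m')) * v z else 0) := by
        apply Finset.sum_congr rfl
        intro z _
        rw [key z]
        by_cases h : Agr (min m m') x z
        · simp [h]
        · simp [h]
    _ = (Fintype.card X : ℝ) ^ (n - max m m') * Tb (min m m') v x := by
        rw [← Finset.sum_filter, Tb, ballm, Finset.mul_sum]

end Operators


section Spectral
variable [Fintype X]

noncomputable def cc (q n i : ℕ) : ℝ :=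
  (1 / (q : ℝ) ^ i) * (∏ t ∈ Finset.Ico 1 i, insectAlpha q n t) * (1 - insectAlpha q n i)

lemma insectP_eq (x y : Fin n → X) :
    insectP x y = ∑ i ∈ Finset.Icc 1 n,
      if treeDist x y ≤ i then cc (Fintype.card X) n i else 0 := by
  rw [insectP, ← Finset.sum_filter]
  apply Finset.sum_congr
  · ext i
    simp only [Finset.mem_filter, Finset.mem_Icc]
    have := treeDist_le_n x y
    omega
  · intro i _
    rfl

noncomputable def Pop (v : (Fin n → X) → ℝ) (x : Fin n → X) : ℝ :=
  ∑ y : Fin n → X, insectP x y * v y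

lemma Pop_eq (v : (Fin n → X) → ℝ) (x : Fin n → X) :
    Pop v x = ∑ i ∈ Finset.Icc 1 n, cc (Fintype.card X) n i * Tb (n - i) v x := by
  calc Pop v x
      = ∑ y : Fin n → X, ∑ i ∈ Finset.Icc 1 n,
          (if treeDist x y ≤ i then cc (Fintype.card X) n i * v y else 0) := by
        apply Finset.sum_congr rfl
        intro y _
        rw [insectP_eq, Finset.sum_mul]
        apply Finset.sum_congr rfl
        intro i _
        rw [ite_mul, zero_mul]
    _ = ∑ i ∈ Finset.Icc 1 n, ∑ y : Fin n → X,
          (if treeDist x y ≤ i then cc (Fintype.card X) n i * v y else 0) := Finset.sum_comm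
    _ = ∑ i ∈ Finset.Icc 1 n, cc (Fintype.card X) n i * Tb (n - i) v x := by
        apply Finset.sum_congr rfl
        intro i hi
        rw [Finset.mem_Icc] at hi
        have hcond : ∀ y : Fin n → X, (treeDist x y ≤ i) ↔ (Agr (n - i) x y) :=
          fun y => treeDist_le_iff hi.2
        calc ∑ y : Fin n → X, (if treeDist x y ≤ i then cc (Fintype.card X) n i * v y else 0)
            = ∑ y : Fin n → X, (if Agr (n - i) x y then cc (Fintype.card X) n i * v y else 0) := by
              apply Finset.sum_congr rfl
              intro y _
              exact if_congr (hcond y) rfl rfl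
          _ = ∑ y ∈ ballm (n - i) x, cc (Fintype.card X) n i * v y := by
              rw [ballm, Finset.sum_filter]
          _ = cc (Fintype.card X) n i * Tb (n - i) v x := by
              rw [Tb, Finset.mul_sum]

end Spectral


section Eigen
variable [Fintype X]

noncomputable def mu (q n j : ℕ) : ℝ := cc q n j * (q : ℝ) ^ j

noncomputable def lam (q n i : ℕ) : ℝ := ∑ j ∈ Finset.Icc 1 (n - i), mu q n j

noncomputable def Ebar (m : ℕ) (v : (Fin n → X) → ℝ) (x : Fin n → X) : ℝ :=
  (1 / (Fintype.card X : ℝ) ^ (n - m)) * Tb m v x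

lemma one_lt_qpow {q : ℕ} (hq : 2 ≤ q) {t : ℕ} (ht : 1 ≤ t) : (1 : ℝ) < (q : ℝ) ^ t := by
  have h1 : (1 : ℝ) < (q : ℝ) := by
    have : (2 : ℝ) ≤ (q : ℝ) := by exact_mod_cast hq
    linarith
  exact one_lt_pow₀ h1 (by omega)

lemma alpha_pos {q : ℕ} (hq : 2 ≤ q) {t : ℕ} (ht : 1 ≤ t) (ht' : t ≤ n - 1) :
    0 < insectAlpha q n t := by
  rw [insectAlpha, if_neg (by omega), if_pos ht']
  apply div_pos <;> [skip; skip] <;>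
    · have := one_lt_qpow hq (t := t) ht
      have := one_lt_qpow hq (t := t + 1) (by omega)
      linarith

lemma alpha_lt_one {q : ℕ} (hq : 2 ≤ q) {j : ℕ} (hj : 1 ≤ j) : insectAlpha q n j < 1 := by
  rw [insectAlpha, if_neg (by omega)]
  by_cases h : j ≤ n - 1
  · rw [if_pos h]
    rw [div_lt_one]
    · have h1 := one_lt_qpow hq (t := j) hj
      have h2 : (q : ℝ) ^ j < (q : ℝ) ^ (j + 1) := by
        apply pow_lt_pow_right₀ (by exact_mod_cast (by omega : (1:ℕ) < q)) (by omega)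
      linarith
    · have := one_lt_qpow hq (t := j + 1) (by omega)
      linarith
  · rw [if_neg h]; norm_num

lemma alpha_nonneg {q : ℕ} (hq : 2 ≤ q) (t : ℕ) : 0 ≤ insectAlpha q n t := by
  rw [insectAlpha]
  by_cases h0 : t = 0
  · simp [h0]
  · rw [if_neg h0]
    by_cases h : t ≤ n - 1
    · rw [if_pos h]
      apply div_nonneg <;>
        · have := one_lt_qpow hq (t := t) (by omega)
          first
          | (have := one_lt_qpow hq (t := t + 1) (by omega); linarith)
          | linarith
    · rw [if_neg h]

lemma cc_pos {q : ℕ} (hq : 2 ≤ q) {i : ℕ} (hi : 1 ≤ i) (hin : i ≤ n) : 0 < cc q n i := by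
  rw [cc]
  apply mul_pos
  apply mul_pos
  · apply div_pos one_pos
    apply pow_pos
    have : (2:ℝ) ≤ (q:ℝ) := by exact_mod_cast hq
    linarith
  · apply Finset.prod_pos
    intro t ht
    rw [Finset.mem_Ico] at ht
    exact alpha_pos hq ht.1 (by omega)
  · have := alpha_lt_one (n := n) hq (j := i) hi
    linarith

lemma mu_pos {q : ℕ} (hq : 2 ≤ q) {i : ℕ} (hi : 1 ≤ i) (hin : i ≤ n) : 0 < mu q n i := by
  rw [mu]
  apply mul_pos (cc_pos hq hi hin)
  apply pow_pos
  have : (2:ℝ) ≤ (q:ℝ) := by exact_mod_cast hq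
  linarith

lemma lam_strictAnti {q : ℕ} (hq : 2 ≤ q) {i i' : ℕ} (h : i < i') (hi' : i' ≤ n) :
    lam q n i' < lam q n i := by
  rw [lam, lam]
  have hsub : Finset.Icc 1 (n - i') ⊆ Finset.Icc 1 (n - i) := by
    apply Finset.Icc_subset_Icc le_rfl
    omega
  have hmem : n - i ∈ Finset.Icc 1 (n - i) ∧ n - i ∉ Finset.Icc 1 (n - i') := by
    constructor
    · rw [Finset.mem_Icc]; omega
    · rw [Finset.mem_Icc]; omega
  apply Finset.sum_lt_sum_of_subset hsub hmem.1 hmem.2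
  · exact mu_pos hq (by rw [Finset.mem_Icc] at hmem; omega) (by omega)
  · intro j hj _
    rw [Finset.mem_Icc] at hj
    exact le_of_lt (mu_pos hq (by omega) (by omega))

lemma lam_inj {q : ℕ} (hq : 2 ≤ q) {i i' : ℕ} (hi : i ≤ n) (hi' : i' ≤ n) (hne : i ≠ i') :
    lam q n i ≠ lam q n i' := by
  rcases Nat.lt_or_ge i i' with h | h
  · exact ne_of_gt (lam_strictAnti hq h hi')
  · have h2 : i' < i := by omega
    exact ne_of_lt (lam_strictAnti hq h2 hi)

lemma Pop_Ebar (hq : 2 ≤ Fintype.card X) {m : ℕ} (hm : m ≤ n) (v : (Fin n → X) → ℝ)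
    (x : Fin n → X) :
    Pop (Ebar m v) x = lam (Fintype.card X) n m * Ebar m v x
      + ∑ j ∈ Finset.Icc (n - m + 1) n, mu (Fintype.card X) n j * Ebar (n - j) v x := by
  have hqne : ((Fintype.card X : ℝ)) ≠ 0 := by
    have : (0:ℕ) < Fintype.card X := by omega
    exact_mod_cast this.ne'
  have hterm : ∀ j ∈ Finset.Icc 1 n,
      cc (Fintype.card X) n j * Tb (n - j) (Ebar m v) x
        = if j ≤ n - m then mu (Fintype.card X) n j * Ebar m v x
          else mu (Fintype.card X) n j * Ebar (n - j) v x := by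
    intro j hj
    rw [Finset.mem_Icc] at hj
    have h1 : Tb (n - j) (Ebar m v) x
        = (1 / (Fintype.card X : ℝ) ^ (n - m)) * Tb (n - j) (Tb m v) x := by
      rw [show Ebar m v = fun y => (1 / (Fintype.card X : ℝ) ^ (n - m)) * Tb m v y from rfl]
      exact Tb_smul _ _ _ _
    rw [h1, Tb_comp (by omega) hm]
    by_cases hcase : j ≤ n - m
    · rw [if_pos hcase]
      have hmax : max (n - j) m = n - j := by omega
      have hmin : min (n - j) m = m := by omega
      rw [hmax, hmin]
      have he : n - (n - j) = j := by omega
      rw [he, mu, Ebar]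
      ring
    · rw [if_neg hcase]
      have hmax : max (n - j) m = m := by omega
      have hmin : min (n - j) m = n - j := by omega
      rw [hmax, hmin, mu, Ebar]
      have he : n - (n - j) = j := by omega
      rw [he]
      have hc1 : (1 / (Fintype.card X : ℝ) ^ (n - m)) * ((Fintype.card X:ℝ) ^ (n - m) * Tb (n-j) v x)
          = Tb (n - j) v x := by
        rw [← mul_assoc, one_div_mul_cancel (pow_ne_zero _ hqne), one_mul]
      rw [hc1]
      have hc2 : cc (Fintype.card X) n j * (Fintype.card X:ℝ) ^ j *
            (1 / (Fintype.card X : ℝ) ^ j * Tb (n - j) v x) = cc (Fintype.card X) n j * Tb (n-j) v x := by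
        field_simp
      rw [hc2]
  rw [Pop_eq, Finset.sum_congr rfl hterm]
  rw [Finset.sum_ite]
  have hs1 : (Finset.Icc 1 n).filter (fun j => j ≤ n - m) = Finset.Icc 1 (n - m) := by
    ext j
    simp only [Finset.mem_filter, Finset.mem_Icc]
    omega
  have hs2 : (Finset.Icc 1 n).filter (fun j => ¬ j ≤ n - m) = Finset.Icc (n - m + 1) n := by
    ext j
    simp only [Finset.mem_filter, Finset.mem_Icc]
    omega
  rw [hs1, hs2, lam, Finset.sum_mul]

end Eigen


section Lagrange
variable [Fintype X]

noncomputable def Pi' (i : ℕ) (v : (Fin n → X) → ℝ) (x : Fin n → X) : ℝ :=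
  if i = 0 then Ebar 0 v x else Ebar i v x - Ebar (i - 1) v x

lemma Pop_sub (f g : (Fin n → X) → ℝ) (x : Fin n → X) :
    Pop (fun y => f y - g y) x = Pop f x - Pop g x := by
  rw [Pop, Pop, Pop, ← Finset.sum_sub_distrib]
  apply Finset.sum_congr rfl
  intro y _
  ring

lemma Pop_smul (a : ℝ) (f : (Fin n → X) → ℝ) (x : Fin n → X) :
    Pop (fun y => a * f y) x = a * Pop f x := by
  rw [Pop, Pop, Finset.mul_sum]
  apply Finset.sum_congr rfl
  intro y _
  ring

lemma Pop_sum {ι : Type*} (S : Finset ι) (F : ι → (Fin n → X) → ℝ) (x : Fin n → X) :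
    Pop (fun y => ∑ i ∈ S, F i y) x = ∑ i ∈ S, Pop (F i) x := by
  calc Pop (fun y => ∑ i ∈ S, F i y) x
      = ∑ y : Fin n → X, ∑ i ∈ S, insectP x y * F i y := by
        rw [Pop]
        apply Finset.sum_congr rfl
        intro y _
        rw [Finset.mul_sum]
    _ = ∑ i ∈ S, ∑ y : Fin n → X, insectP x y * F i y := Finset.sum_comm
    _ = ∑ i ∈ S, Pop (F i) x := rfl

lemma Pop_Pi' (hq : 2 ≤ Fintype.card X) {i : ℕ} (hi : i ≤ n) (v : (Fin n → X) → ℝ)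
    (x : Fin n → X) : Pop (Pi' i v) x = lam (Fintype.card X) n i * Pi' i v x := by
  by_cases h0 : i = 0
  · subst h0
    have hfun : Pi' 0 v = Ebar 0 v := by
      funext z
      rw [Pi', if_pos rfl]
    rw [hfun, Pop_Ebar hq (Nat.zero_le n)]
    have hempty : Finset.Icc (n - 0 + 1) n = ∅ := Finset.Icc_eq_empty (by omega)
    rw [hempty, Finset.sum_empty, add_zero]
  · have h1 : 1 ≤ i := by omega
    have hfun : Pi' i v = fun z => Ebar i v z - Ebar (i - 1) v z := by
      funext z
      rw [Pi', if_neg h0]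
    rw [hfun, Pop_sub, Pop_Ebar hq hi, Pop_Ebar hq (by omega)]
    have hins : Finset.Icc (n - i + 1) n = insert (n - i + 1) (Finset.Icc (n - (i - 1) + 1) n) := by
      have : n - (i - 1) + 1 = n - i + 2 := by omega
      rw [this]
      ext j
      simp only [Finset.mem_Icc, Finset.mem_insert]
      omega
    rw [hins, Finset.sum_insert (by rw [Finset.mem_Icc]; omega)]
    have he1 : n - (n - i + 1) = i - 1 := by omega
    rw [he1]
    have hlam : lam (Fintype.card X) n (i - 1)
        = lam (Fintype.card X) n i + mu (Fintype.card X) n (n - i + 1) := by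
      rw [lam, lam]
      have h2 : n - (i - 1) = (n - i) + 1 := by omega
      rw [h2, Finset.sum_Icc_succ_top (by omega)]
    rw [hlam]
    simp only [Pi', if_neg h0]
    ring

lemma Ebar_sum_Pi' {m : ℕ} (v : (Fin n → X) → ℝ) (x : Fin n → X) :
    Ebar m v x = ∑ i ∈ Finset.range (m + 1), Pi' i v x := by
  induction m with
  | zero => rw [Finset.sum_range_one]; simp [Pi']
  | succ m ih =>
      rw [Finset.sum_range_succ, ← ih]
      simp only [Pi', if_neg (show ¬ (m + 1 = 0) by omega), Nat.add_sub_cancel]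
      ring

lemma v_eq_sum_Pi' (v : (Fin n → X) → ℝ) (x : Fin n → X) :
    v x = ∑ i ∈ Finset.range (n + 1), Pi' i v x := by
  rw [← Ebar_sum_Pi']
  rw [Ebar, Nat.sub_self, pow_zero]
  rw [Tb_n]
  norm_num

noncomputable def PopApply (l : List ℝ) (v : (Fin n → X) → ℝ) : (Fin n → X) → ℝ :=
  l.foldr (fun a w => fun x => Pop w x - a * w x) v

lemma PopApply_nil (v : (Fin n → X) → ℝ) : PopApply [] v = v := rfl

lemma PopApply_cons (a : ℝ) (l : List ℝ) (v : (Fin n → X) → ℝ) :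
    PopApply (a :: l) v = fun x => Pop (PopApply l v) x - a * PopApply l v x := rfl

lemma PopApply_eig {c : ℝ} {w : (Fin n → X) → ℝ} (hw : ∀ x, Pop w x = c * w x) (l : List ℝ) :
    ∀ x, PopApply l w x = (l.map (fun a => c - a)).prod * w x := by
  induction l with
  | nil => intro x; rw [PopApply_nil, List.map_nil, List.prod_nil, one_mul]
  | cons a l ih =>
      intro x
      have hfun : PopApply l w = fun z => (l.map (fun a => c - a)).prod * w z := funext ih
      rw [PopApply_cons, hfun]
      simp only []
      rw [Pop_smul, hw, List.map_cons, List.prod_cons]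
      ring

lemma PopApply_sum {ι : Type*} (l : List ℝ) (S : Finset ι) (F : ι → (Fin n → X) → ℝ) :
    ∀ x, PopApply l (fun y => ∑ i ∈ S, F i y) x = ∑ i ∈ S, PopApply l (F i) x := by
  induction l with
  | nil => intro x; rfl
  | cons a l ih =>
      intro x
      have hfun : PopApply l (fun y => ∑ i ∈ S, F i y)
          = fun z => ∑ i ∈ S, PopApply l (F i) z := funext ih
      rw [PopApply_cons, hfun]
      simp only []
      rw [Pop_sum, Finset.mul_sum, ← Finset.sum_sub_distrib]
      apply Finset.sum_congr rfl
      intro i _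
      rw [PopApply_cons]

end Lagrange


section ConstSec
variable [Fintype X] {k : ℕ}

/-- `u` and `w` lie in exactly the same parts -/
def sameCol (L : Fin k → Finset (Fin n → X)) (u w : Fin n → X) : Prop :=
  ∀ s, u ∈ L s ↔ w ∈ L s

lemma sameCol_refl (L : Fin k → Finset (Fin n → X)) (u : Fin n → X) : sameCol L u u :=
  fun _ => Iff.rfl

lemma sameCol_symm {L : Fin k → Finset (Fin n → X)} {u w : Fin n → X} (h : sameCol L u w) :
    sameCol L w u := fun s => (h s).symm

lemma sameCol_trans {L : Fin k → Finset (Fin n → X)} {u w z : Fin n → X} (h : sameCol L u w)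
    (h' : sameCol L w z) : sameCol L u z := fun s => (h s).trans (h' s)

/-- real-valued functions constant on the parts -/
def Const (L : Fin k → Finset (Fin n → X)) (v : (Fin n → X) → ℝ) : Prop :=
  ∀ u w, sameCol L u w → v u = v w

lemma mem_part_unique {L : Fin k → Finset (Fin n → X)}
    (hL_part : ∀ x : Fin n → X, ∃! s, x ∈ L s) {y : Fin n → X} {s s' : Fin k}
    (h : y ∈ L s) (h' : y ∈ L s') : s = s' := by
  obtain ⟨c, _, hu⟩ := hL_part y
  rw [hu s h, hu s' h']

lemma sameCol_of_mem {L : Fin k → Finset (Fin n → X)}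
    (hL_part : ∀ x : Fin n → X, ∃! s, x ∈ L s) {y z : Fin n → X} {s : Fin k}
    (hy : y ∈ L s) (hz : z ∈ L s) : sameCol L y z := by
  intro s'
  constructor
  · intro h; rwa [← mem_part_unique hL_part hy h]
  · intro h; rwa [← mem_part_unique hL_part hz h]

lemma Const_Pop {L : Fin k → Finset (Fin n → X)}
    (hL_nonempty : ∀ s, (L s).Nonempty)
    (hL_part : ∀ x : Fin n → X, ∃! s, x ∈ L s)
    (hlump : ∀ r s : Fin k, ∀ x ∈ L r, ∀ x' ∈ L r,
        ∑ y ∈ L s, insectP x y = ∑ y ∈ L s, insectP x' y)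
    {v : (Fin n → X) → ℝ} (hv : Const L v) : Const L (Pop v) := by
  classical
  have huniv : (Finset.univ : Finset (Fin n → X)) = Finset.univ.biUnion (fun s : Fin k => L s) := by
    ext y
    simp only [Finset.mem_univ, Finset.mem_biUnion, true_iff]
    obtain ⟨c, hc, _⟩ := hL_part y
    exact ⟨c, trivial, hc⟩
  have hdisj : ∀ s ∈ (Finset.univ : Finset (Fin k)), ∀ t ∈ (Finset.univ : Finset (Fin k)),
      s ≠ t → Disjoint (L s) (L t) := by
    intro s _ t _ hst
    rw [Finset.disjoint_left]
    intro y hys hyt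
    exact hst (mem_part_unique hL_part hys hyt)
  have hsplit : ∀ z : Fin n → X, Pop v z
      = ∑ s : Fin k, v ((hL_nonempty s).choose) * ∑ y ∈ L s, insectP z y := by
    intro z
    rw [Pop]
    rw [huniv, Finset.sum_biUnion hdisj]
    apply Finset.sum_congr rfl
    intro s _
    rw [Finset.mul_sum]
    apply Finset.sum_congr rfl
    intro y hy
    have hvy : v y = v ((hL_nonempty s).choose) :=
      hv _ _ (sameCol_of_mem hL_part hy (hL_nonempty s).choose_spec)
    rw [hvy]
    ring
  intro u w huw
  obtain ⟨r, hr, _⟩ := hL_part u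
  have hwr : w ∈ L r := (huw r).1 hr
  rw [hsplit u, hsplit w]
  apply Finset.sum_congr rfl
  intro s _
  rw [hlump r s u hr w hwr]

lemma Const_PopApply {L : Fin k → Finset (Fin n → X)}
    (hL_nonempty : ∀ s, (L s).Nonempty)
    (hL_part : ∀ x : Fin n → X, ∃! s, x ∈ L s)
    (hlump : ∀ r s : Fin k, ∀ x ∈ L r, ∀ x' ∈ L r,
        ∑ y ∈ L s, insectP x y = ∑ y ∈ L s, insectP x' y)
    {v : (Fin n → X) → ℝ} (hv : Const L v) (l : List ℝ) : Const L (PopApply l v) := by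
  induction l with
  | nil => exact hv
  | cons a l ih =>
      rw [PopApply_cons]
      intro u w huw
      simp only []
      rw [Const_Pop hL_nonempty hL_part hlump ih u w huw, ih u w huw]

lemma Const_Pi' {L : Fin k → Finset (Fin n → X)}
    (hq : 2 ≤ Fintype.card X)
    (hL_nonempty : ∀ s, (L s).Nonempty)
    (hL_part : ∀ x : Fin n → X, ∃! s, x ∈ L s)
    (hlump : ∀ r s : Fin k, ∀ x ∈ L r, ∀ x' ∈ L r,
        ∑ y ∈ L s, insectP x y = ∑ y ∈ L s, insectP x' y)
    {v : (Fin n → X) → ℝ} (hv : Const L v) {i : ℕ} (hi : i ≤ n) : Const L (Pi' i v) := by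
  classical
  set q := Fintype.card X with hqdef
  set l : List ℝ := ((List.range (n + 1)).filter (fun j => j ≠ i)).map (lam q n) with hl
  set C : ℝ := (l.map (fun a => lam q n i - a)).prod with hC
  have hCne : C ≠ 0 := by
    rw [hC]
    apply List.prod_ne_zero
    intro h0
    rw [List.mem_map] at h0
    obtain ⟨a, ha, heq⟩ := h0
    rw [hl, List.mem_map] at ha
    obtain ⟨j, hj, rfl⟩ := ha
    rw [List.mem_filter, List.mem_range] at hj
    have hjn : j ≤ n := by omega
    have hjne : j ≠ i := by simpa using hj.2
    have hne := lam_inj (n := n) hq hi hjn (fun h => hjne (h.symm))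
    apply hne
    linarith [sub_eq_zero.mp heq]
  have hkey : ∀ x, PopApply l v x = C * Pi' i v x := by
    intro x
    have hv_eq : v = fun y => ∑ j ∈ Finset.range (n + 1), Pi' j v y := by
      funext y
      exact v_eq_sum_Pi' v y
    have h2 : PopApply l v x = ∑ j ∈ Finset.range (n + 1), PopApply l (Pi' j v) x := by
      conv_lhs => rw [hv_eq]
      exact PopApply_sum l _ _ x
    rw [h2]
    rw [Finset.sum_eq_single i]
    · have heig : ∀ z, Pop (Pi' i v) z = lam q n i * Pi' i v z := fun z => Pop_Pi' hq hi v z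
      rw [PopApply_eig heig, hC]
    · intro j hj hjne
      rw [Finset.mem_range] at hj
      have heigj : ∀ z, Pop (Pi' j v) z = lam q n j * Pi' j v z :=
        fun z => Pop_Pi' hq (by omega) v z
      rw [PopApply_eig heigj]
      have hzero : (0 : ℝ) ∈ l.map (fun a => lam q n j - a) := by
        rw [List.mem_map]
        refine ⟨lam q n j, ?_, by ring⟩
        rw [hl, List.mem_map]
        refine ⟨j, ?_, rfl⟩
        rw [List.mem_filter, List.mem_range]
        exact ⟨by omega, by simpa using hjne⟩
      rw [List.prod_eq_zero hzero, zero_mul]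
    · intro habs
      exact absurd (Finset.mem_range.2 (by omega)) habs
  intro u w huw
  have h1 := Const_PopApply hL_nonempty hL_part hlump hv l u w huw
  rw [hkey u, hkey w] at h1
  exact mul_left_cancel₀ hCne h1

lemma Const_Tb {L : Fin k → Finset (Fin n → X)}
    (hq : 2 ≤ Fintype.card X)
    (hL_nonempty : ∀ s, (L s).Nonempty)
    (hL_part : ∀ x : Fin n → X, ∃! s, x ∈ L s)
    (hlump : ∀ r s : Fin k, ∀ x ∈ L r, ∀ x' ∈ L r,
        ∑ y ∈ L s, insectP x y = ∑ y ∈ L s, insectP x' y)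
    {v : (Fin n → X) → ℝ} (hv : Const L v) {m : ℕ} (hm : m ≤ n) :
    Const L (Tb m v) := by
  intro u w huw
  have hE : Ebar m v u = Ebar m v w := by
    rw [Ebar_sum_Pi', Ebar_sum_Pi']
    apply Finset.sum_congr rfl
    intro i hi
    rw [Finset.mem_range] at hi
    exact Const_Pi' hq hL_nonempty hL_part hlump hv (by omega) u w huw
  have hqpow : ((Fintype.card X : ℝ)) ^ (n - m) ≠ 0 := by
    apply pow_ne_zero
    have : (0:ℕ) < Fintype.card X := by omega
    exact_mod_cast this.ne'
  rw [Ebar, Ebar] at hE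
  have := mul_left_cancel₀ (by simpa using one_div_ne_zero hqpow) hE
  exact this

lemma part1 {L : Fin k → Finset (Fin n → X)}
    (hq : 2 ≤ Fintype.card X)
    (hL_nonempty : ∀ s, (L s).Nonempty)
    (hL_part : ∀ x : Fin n → X, ∃! s, x ∈ L s)
    (hlump : ∀ r s : Fin k, ∀ x ∈ L r, ∀ x' ∈ L r,
        ∑ y ∈ L s, insectP x y = ∑ y ∈ L s, insectP x' y)
    {u w : Fin n → X} (huw : sameCol L u w) {m : ℕ} (hm : m ≤ n) (s : Fin k) :
    ((ballm m u).filter (fun y => y ∈ L s)).card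
      = ((ballm m w).filter (fun y => y ∈ L s)).card := by
  classical
  set v : (Fin n → X) → ℝ := fun y => if y ∈ L s then (1:ℝ) else 0 with hvdef
  have hv : Const L v := by
    intro a b hab
    rw [hvdef]
    simp only []
    exact if_congr (hab s) rfl rfl
  have h := Const_Tb hq hL_nonempty hL_part hlump hv hm u w huw
  have hval : ∀ z : Fin n → X, Tb m v z = (((ballm m z).filter (fun y => y ∈ L s)).card : ℝ) := by
    intro z
    rw [Tb, hvdef]
    rw [Finset.sum_boole]
  rw [hval u, hval w] at h
  exact_mod_cast h

end ConstSec


section Matching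

lemma matching {A : Type*} [Fintype A] [DecidableEq A] {k : ℕ}
    (F G : A → (Fin k → ℕ)) (a0 b0 : A)
    (h00 : F a0 = G b0)
    (hFF : ∀ a a' s, F a s ≠ 0 → F a' s ≠ 0 → F a = F a')
    (hGG : ∀ b b' s, G b s ≠ 0 → G b' s ≠ 0 → G b = G b')
    (hFG : ∀ a b s, F a s ≠ 0 → G b s ≠ 0 → F a = G b)
    (hsum : ∀ s, ∑ a, F a s = ∑ b, G b s)
    (hFne : ∀ a, ∃ s, F a s ≠ 0)
    (hGne : ∀ b, ∃ s, G b s ≠ 0) :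
    ∃ σ : Equiv.Perm A, σ a0 = b0 ∧ ∀ a, G (σ a) = F a := by
  classical
  have hfib : ∀ V : Fin k → ℕ,
      (Finset.univ.filter (fun a => F a = V)).card
        = (Finset.univ.filter (fun b => G b = V)).card := by
    intro V
    by_cases hFfib : ∃ a, F a = V
    · obtain ⟨a1, ha1⟩ := hFfib
      obtain ⟨s, hs⟩ := hFne a1
      have hVs : V s ≠ 0 := by rwa [ha1] at hs
      have hGn : ∃ b, G b s ≠ 0 := by
        by_contra hcon
        push_neg at hcon
        have h1 : ∑ b, G b s = 0 := Finset.sum_eq_zero (fun b _ => hcon b)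
        have h2 : ∑ a, F a s ≠ 0 := by
          intro h
          exact hs (Finset.sum_eq_zero_iff.1 h a1 (Finset.mem_univ a1))
        exact h2 ((hsum s).trans h1)
      obtain ⟨b1, hb1⟩ := hGn
      have hGb1 : G b1 = V := by rw [← ha1]; exact (hFG a1 b1 s hs hb1).symm
      have hFset : Finset.univ.filter (fun a => F a = V)
          = Finset.univ.filter (fun a => F a s ≠ 0) := by
        ext a
        simp only [Finset.mem_filter, Finset.mem_univ, true_and]
        constructor
        · intro h; rw [h]; exact hVs
        · intro h; rw [hFF a a1 s h hs, ha1]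
      have hGset : Finset.univ.filter (fun b => G b = V)
          = Finset.univ.filter (fun b => G b s ≠ 0) := by
        ext b
        simp only [Finset.mem_filter, Finset.mem_univ, true_and]
        constructor
        · intro h; rw [h]; exact hVs
        · intro h; rw [hGG b b1 s h hb1, hGb1]
      have hsF : ∑ a, F a s = (Finset.univ.filter (fun a => F a s ≠ 0)).card * V s := by
        rw [← Finset.sum_filter_ne_zero (s := Finset.univ) (f := fun a => F a s)]
        rw [Finset.sum_congr rfl (fun a ha => ?_), Finset.sum_const, smul_eq_mul]
        rw [Finset.mem_filter] at ha
        rw [hFF a a1 s ha.2 hs, ha1]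
      have hsG : ∑ b, G b s = (Finset.univ.filter (fun b => G b s ≠ 0)).card * V s := by
        rw [← Finset.sum_filter_ne_zero (s := Finset.univ) (f := fun b => G b s)]
        rw [Finset.sum_congr rfl (fun b hb => ?_), Finset.sum_const, smul_eq_mul]
        rw [Finset.mem_filter] at hb
        rw [hGG b b1 s hb.2 hb1, hGb1]
      rw [hFset, hGset]
      have := (hsum s).trans hsG
      rw [hsF] at this
      exact Nat.eq_of_mul_eq_mul_right (Nat.pos_of_ne_zero hVs) this
    · have hGfib : ¬ ∃ b, G b = V := by
        rintro ⟨b1, hb1⟩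
        obtain ⟨s, hs⟩ := hGne b1
        have hVs : V s ≠ 0 := by rwa [hb1] at hs
        apply hFfib
        have hFn : ∃ a, F a s ≠ 0 := by
          by_contra hcon
          push_neg at hcon
          have h1 : ∑ a, F a s = 0 := Finset.sum_eq_zero (fun a _ => hcon a)
          have h2 : ∑ b, G b s ≠ 0 := by
            intro h
            exact hs (Finset.sum_eq_zero_iff.1 h b1 (Finset.mem_univ b1))
          exact h2 ((hsum s).symm.trans h1)
        obtain ⟨a1, ha1⟩ := hFn
        exact ⟨a1, (hFG a1 b1 s ha1 hs).trans hb1⟩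
      rw [Finset.filter_false_of_mem, Finset.filter_false_of_mem]
      · intro b _ h; exact hGfib ⟨b, h⟩
      · intro a _ h; exact hFfib ⟨a, h⟩
  have hcards : ∀ V : Fin k → ℕ, Fintype.card {a // F a = V} = Fintype.card {b // G b = V} := by
    intro V
    rw [Fintype.card_subtype, Fintype.card_subtype]
    exact hfib V
  have e : ∀ V : Fin k → ℕ, {a // F a = V} ≃ {b // G b = V} :=
    fun V => Fintype.equivOfCardEq (hcards V)
  let τ : Equiv.Perm A :=
    ((Equiv.sigmaFiberEquiv F).symm.trans (Equiv.sigmaCongrRight e)).trans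
      (Equiv.sigmaFiberEquiv G)
  have hτ : ∀ a, G (τ a) = F a := by
    intro a
    have : τ a = ((e (F a)) ⟨a, rfl⟩).1 := rfl
    rw [this]
    exact ((e (F a)) ⟨a, rfl⟩).2
  refine ⟨τ.trans (Equiv.swap (τ a0) b0), ?_, ?_⟩
  · simp [Equiv.swap_apply_left]
  · intro a
    simp only [Equiv.trans_apply]
    rcases eq_or_ne (τ a) (τ a0) with h | h
    · rw [h, Equiv.swap_apply_left]
      rw [← h00, ← hτ a0, ← h, hτ a]
    · rcases eq_or_ne (τ a) b0 with h2 | h2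
      · rw [h2, Equiv.swap_apply_right, ← hτ a, h2, ← h00, hτ a0]
      · rw [Equiv.swap_apply_of_ne_of_ne h h2, hτ a]

end Matching


section Helpers

lemma agr_update (x : Fin n → X) {m : ℕ} (hm : m < n) (a : X) :
    Agr m x (Function.update x ⟨m, hm⟩ a) := by
  intro i hi
  rw [Function.update_of_ne (Fin.ne_of_val_ne (by simp only [Fin.val_mk]; omega))]

lemma agr_update_iff {x u : Fin n → X} {m : ℕ} (hm : m < n) {a : X} :
    Agr (m + 1) (Function.update x ⟨m, hm⟩ a) u ↔ (Agr m x u ∧ u ⟨m, hm⟩ = a) := by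
  constructor
  · intro h
    constructor
    · intro i hi
      have h1 := h i (by omega)
      rwa [Function.update_of_ne (Fin.ne_of_val_ne (by simp only [Fin.val_mk]; omega))] at h1
    · have h1 := h ⟨m, hm⟩ (by simp only [Fin.val_mk]; omega)
      rw [Function.update_self] at h1
      exact h1.symm
  · rintro ⟨h1, h2⟩
    intro i hi
    rcases Nat.lt_or_ge (i : ℕ) m with hlt | hge
    · rw [Function.update_of_ne (Fin.ne_of_val_ne (by simp only [Fin.val_mk]; omega))]
      exact h1 i hlt
    · have hieq : i = ⟨m, hm⟩ := Fin.ext (by simp only [Fin.val_mk]; omega)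
      rw [hieq, Function.update_self, h2]

end Helpers


section LemD
variable [Fintype X] {k : ℕ}

lemma ball_split (L : Fin k → Finset (Fin n → X)) {m : ℕ} (hm : m < n)
    (z0 : Fin n → X) (s : Fin k) :
    ((ballm m z0).filter (fun z => z ∈ L s)).card
      = ∑ a : X, ((ballm (m + 1) (Function.update z0 ⟨m, hm⟩ a)).filter (fun z => z ∈ L s)).card := by
  classical
  rw [Finset.card_eq_sum_card_fiberwise
    (f := fun z => z ⟨m, hm⟩) (t := Finset.univ) (fun z _ => Finset.mem_univ _)]
  apply Finset.sum_congr rfl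
  intro a _
  congr 1
  ext z
  simp only [Finset.mem_filter, mem_ballm]
  constructor
  · rintro ⟨⟨hz1, hz2⟩, hz3⟩
    exact ⟨(agr_update_iff hm).2 ⟨hz1, hz3⟩, hz2⟩
  · rintro ⟨hz1, hz2⟩
    obtain ⟨ha, hv⟩ := (agr_update_iff hm).1 hz1
    exact ⟨⟨ha, hz2⟩, hv⟩

lemma lemD {L : Fin k → Finset (Fin n → X)}
    (hL_part : ∀ x : Fin n → X, ∃! s, x ∈ L s)
    (hcount : ∀ u w : Fin n → X, sameCol L u w → ∀ m, m ≤ n → ∀ s,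
      ((ballm m u).filter (fun y => y ∈ L s)).card
        = ((ballm m w).filter (fun y => y ∈ L s)).card) :
    ∀ r : ℕ, r ≤ n → ∀ x y : Fin n → X, sameCol L x y →
      ∃ φ ψ : (Fin n → X) → (Fin n → X),
        (∀ u, Agr (n - r) x u → Agr (n - r) y (φ u)) ∧
        (∀ v, Agr (n - r) y v → Agr (n - r) x (ψ v)) ∧
        (∀ u, Agr (n - r) x u → ψ (φ u) = u) ∧
        (∀ v, Agr (n - r) y v → φ (ψ v) = v) ∧
        φ x = y ∧
        (∀ u u', Agr (n - r) x u → Agr (n - r) x u' →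
          treeDist (φ u) (φ u') = treeDist u u') ∧
        (∀ u, Agr (n - r) x u → sameCol L (φ u) u) := by
  classical
  intro r
  induction r with
  | zero =>
      intro _ x y hxy
      refine ⟨fun _ => y, fun _ => x, ?_, ?_, ?_, ?_, rfl, ?_, ?_⟩ <;>
        simp only [Nat.sub_zero]
      · intro u _; exact Agr.refl n y
      · intro v _; exact Agr.refl n x
      · intro u hu; exact agr_n_iff.1 hu
      · intro v hv; exact agr_n_iff.1 hv
      · intro u u' hu hu'
        obtain rfl := (agr_n_iff.1 hu).symm
        obtain rfl := (agr_n_iff.1 hu').symm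
        rw [treeDist_self, treeDist_self]
      · intro u hu
        obtain rfl := (agr_n_iff.1 hu).symm
        exact sameCol_symm hxy
  | succ r IH =>
      intro hr1 x y hxy
      have hrn : r ≤ n := by omega
      set m : ℕ := n - (r + 1) with hmdef
      have hm : m < n := by omega
      have hm1n : m + 1 ≤ n := by omega
      -- the two child-count functions
      set F : X → (Fin k → ℕ) := fun a s =>
        ((ballm (m + 1) (Function.update x ⟨m, hm⟩ a)).filter (fun z => z ∈ L s)).card
        with hFdef
      set G : X → (Fin k → ℕ) := fun b s =>
        ((ballm (m + 1) (Function.update y ⟨m, hm⟩ b)).filter (fun z => z ∈ L s)).card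
        with hGdef
      have hxa0 : Function.update x ⟨m, hm⟩ (x ⟨m, hm⟩) = x := Function.update_eq_self _ _
      have hya0 : Function.update y ⟨m, hm⟩ (y ⟨m, hm⟩) = y := Function.update_eq_self _ _
      have hFne : ∀ a, ∃ s, F a s ≠ 0 := by
        intro a
        obtain ⟨s, hs, -⟩ := hL_part (Function.update x ⟨m, hm⟩ a)
        refine ⟨s, ?_⟩
        have hmem : Function.update x ⟨m, hm⟩ a
            ∈ (ballm (m + 1) (Function.update x ⟨m, hm⟩ a)).filter (fun z => z ∈ L s) :=
          Finset.mem_filter.2 ⟨self_mem_ballm _ _, hs⟩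
        exact (Finset.card_pos.2 ⟨_, hmem⟩).ne'
      have hGne : ∀ b, ∃ s, G b s ≠ 0 := by
        intro b
        obtain ⟨s, hs, -⟩ := hL_part (Function.update y ⟨m, hm⟩ b)
        refine ⟨s, ?_⟩
        have hmem : Function.update y ⟨m, hm⟩ b
            ∈ (ballm (m + 1) (Function.update y ⟨m, hm⟩ b)).filter (fun z => z ∈ L s) :=
          Finset.mem_filter.2 ⟨self_mem_ballm _ _, hs⟩
        exact (Finset.card_pos.2 ⟨_, hmem⟩).ne'
      have hFF : ∀ a a' s, F a s ≠ 0 → F a' s ≠ 0 → F a = F a' := by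
        intro a a' s h h'
        obtain ⟨u, hu⟩ := Finset.card_pos.mp (Nat.pos_of_ne_zero h)
        obtain ⟨u', hu'⟩ := Finset.card_pos.mp (Nat.pos_of_ne_zero h')
        rw [Finset.mem_filter] at hu hu'
        have hsc : sameCol L u u' := sameCol_of_mem hL_part hu.2 hu'.2
        funext s'
        show ((ballm (m + 1) (Function.update x ⟨m, hm⟩ a)).filter (fun z => z ∈ L s')).card
          = ((ballm (m + 1) (Function.update x ⟨m, hm⟩ a')).filter (fun z => z ∈ L s')).card
        rw [ballm_congr (mem_ballm.1 hu.1), ballm_congr (mem_ballm.1 hu'.1)]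
        exact hcount u u' hsc (m + 1) hm1n s'
      have hGG : ∀ b b' s, G b s ≠ 0 → G b' s ≠ 0 → G b = G b' := by
        intro b b' s h h'
        obtain ⟨u, hu⟩ := Finset.card_pos.mp (Nat.pos_of_ne_zero h)
        obtain ⟨u', hu'⟩ := Finset.card_pos.mp (Nat.pos_of_ne_zero h')
        rw [Finset.mem_filter] at hu hu'
        have hsc : sameCol L u u' := sameCol_of_mem hL_part hu.2 hu'.2
        funext s'
        show ((ballm (m + 1) (Function.update y ⟨m, hm⟩ b)).filter (fun z => z ∈ L s')).card
          = ((ballm (m + 1) (Function.update y ⟨m, hm⟩ b')).filter (fun z => z ∈ L s')).card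
        rw [ballm_congr (mem_ballm.1 hu.1), ballm_congr (mem_ballm.1 hu'.1)]
        exact hcount u u' hsc (m + 1) hm1n s'
      have hFG : ∀ a b s, F a s ≠ 0 → G b s ≠ 0 → F a = G b := by
        intro a b s h h'
        obtain ⟨u, hu⟩ := Finset.card_pos.mp (Nat.pos_of_ne_zero h)
        obtain ⟨u', hu'⟩ := Finset.card_pos.mp (Nat.pos_of_ne_zero h')
        rw [Finset.mem_filter] at hu hu'
        have hsc : sameCol L u u' := sameCol_of_mem hL_part hu.2 hu'.2
        funext s'
        show ((ballm (m + 1) (Function.update x ⟨m, hm⟩ a)).filter (fun z => z ∈ L s')).card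
          = ((ballm (m + 1) (Function.update y ⟨m, hm⟩ b)).filter (fun z => z ∈ L s')).card
        rw [ballm_congr (mem_ballm.1 hu.1), ballm_congr (mem_ballm.1 hu'.1)]
        exact hcount u u' hsc (m + 1) hm1n s'
      have h00 : F (x ⟨m, hm⟩) = G (y ⟨m, hm⟩) := by
        funext s
        show ((ballm (m + 1) (Function.update x ⟨m, hm⟩ (x ⟨m, hm⟩))).filter (fun z => z ∈ L s)).card
          = ((ballm (m + 1) (Function.update y ⟨m, hm⟩ (y ⟨m, hm⟩))).filter (fun z => z ∈ L s)).card
        rw [hxa0, hya0]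
        exact hcount x y hxy (m + 1) hm1n s
      have hsum : ∀ s, ∑ a, F a s = ∑ b, G b s := by
        intro s
        rw [← ball_split L hm x s, ← ball_split L hm y s]
        exact hcount x y hxy m (by omega) s
      obtain ⟨σ, hσ0, hσ⟩ := matching F G (x ⟨m, hm⟩) (y ⟨m, hm⟩) h00 hFF hGG hFG hsum hFne hGne
      -- choose matched base points in each pair of children
      have hpq : ∀ a : X, ∃ uv : (Fin n → X) × (Fin n → X),
          Agr (m + 1) (Function.update x ⟨m, hm⟩ a) uv.1 ∧
          Agr (m + 1) (Function.update y ⟨m, hm⟩ (σ a)) uv.2 ∧ sameCol L uv.1 uv.2 := by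
        intro a
        obtain ⟨s, hs, -⟩ := hL_part (Function.update x ⟨m, hm⟩ a)
        have hFas : F a s ≠ 0 := by
          have hmem : Function.update x ⟨m, hm⟩ a
              ∈ (ballm (m + 1) (Function.update x ⟨m, hm⟩ a)).filter (fun z => z ∈ L s) :=
            Finset.mem_filter.2 ⟨self_mem_ballm _ _, hs⟩
          exact (Finset.card_pos.2 ⟨_, hmem⟩).ne'
        have hGas : G (σ a) s ≠ 0 := by rw [hσ a]; exact hFas
        obtain ⟨v, hv⟩ := Finset.card_pos.mp (Nat.pos_of_ne_zero hGas)
        rw [Finset.mem_filter] at hv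
        exact ⟨(Function.update x ⟨m, hm⟩ a, v),
          Agr.refl _ _, mem_ballm.1 hv.1, sameCol_of_mem hL_part hs hv.2⟩
      choose pq hp hq hpq' using hpq
      set P : X → (Fin n → X) := fun a => if a = x ⟨m, hm⟩ then x else (pq a).1 with hPdef
      set Q : X → (Fin n → X) := fun a => if a = x ⟨m, hm⟩ then y else (pq a).2 with hQdef
      have hP : ∀ a, Agr (m + 1) (Function.update x ⟨m, hm⟩ a) (P a) := by
        intro a
        show Agr (m + 1) (Function.update x ⟨m, hm⟩ a) (if a = x ⟨m, hm⟩ then x else (pq a).1)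
        by_cases ha : a = x ⟨m, hm⟩
        · rw [if_pos ha, ha, hxa0]; exact Agr.refl _ _
        · rw [if_neg ha]; exact hp a
      have hQ : ∀ a, Agr (m + 1) (Function.update y ⟨m, hm⟩ (σ a)) (Q a) := by
        intro a
        show Agr (m + 1) (Function.update y ⟨m, hm⟩ (σ a)) (if a = x ⟨m, hm⟩ then y else (pq a).2)
        by_cases ha : a = x ⟨m, hm⟩
        · rw [if_pos ha, ha, hσ0, hya0]; exact Agr.refl _ _
        · rw [if_neg ha]; exact hq a
      have hPQ : ∀ a, sameCol L (P a) (Q a) := by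
        intro a
        show sameCol L (if a = x ⟨m, hm⟩ then x else (pq a).1)
          (if a = x ⟨m, hm⟩ then y else (pq a).2)
        by_cases ha : a = x ⟨m, hm⟩
        · rw [if_pos ha, if_pos ha]; exact hxy
        · rw [if_neg ha, if_neg ha]; exact hpq' a
      have hPa0 : P (x ⟨m, hm⟩) = x := if_pos rfl
      have hQa0 : Q (x ⟨m, hm⟩) = y := if_pos rfl
      choose Φ Ψ B1 B2 B3 B4 B5 B6 B7 using fun a => IH hrn (P a) (Q a) (hPQ a)
      have hnr : n - r = m + 1 := by omega
      rw [hnr] at B1 B2 B3 B4 B6 B7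
      -- the glued maps
      set φ : (Fin n → X) → (Fin n → X) :=
        fun u => if Agr m x u then Φ (u ⟨m, hm⟩) u else u with hφdef
      set ψ : (Fin n → X) → (Fin n → X) :=
        fun v => if Agr m y v then Ψ (σ.symm (v ⟨m, hm⟩)) v else v with hψdef
      -- membership of u in its child ball
      have hPu : ∀ u, Agr m x u → Agr (m + 1) (P (u ⟨m, hm⟩)) u := by
        intro u hu
        exact (hP (u ⟨m, hm⟩)).symm.trans ((agr_update_iff hm).2 ⟨hu, rfl⟩)
      have hQv : ∀ v, Agr m y v → Agr (m + 1) (Q (σ.symm (v ⟨m, hm⟩))) v := by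
        intro v hv
        refine (hQ (σ.symm (v ⟨m, hm⟩))).symm.trans ((agr_update_iff hm).2 ⟨hv, ?_⟩)
        rw [Equiv.apply_symm_apply]
      -- image description
      have himg : ∀ u, Agr m x u → φ u = Φ (u ⟨m, hm⟩) u ∧ Agr m y (φ u) ∧
          (φ u) ⟨m, hm⟩ = σ (u ⟨m, hm⟩) := by
        intro u hu
        have heq : φ u = Φ (u ⟨m, hm⟩) u := by rw [hφdef]; simp only [if_pos hu]
        have h1 : Agr (m + 1) (Q (u ⟨m, hm⟩)) (Φ (u ⟨m, hm⟩) u) := B1 _ u (hPu u hu)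
        have h2 : Agr (m + 1) (Function.update y ⟨m, hm⟩ (σ (u ⟨m, hm⟩))) (Φ (u ⟨m, hm⟩) u) :=
          (hQ (u ⟨m, hm⟩)).trans h1
        obtain ⟨h3, h4⟩ := (agr_update_iff hm).1 h2
        exact ⟨heq, by rw [heq]; exact h3, by rw [heq]; exact h4⟩
      have hpre : ∀ v, Agr m y v → ψ v = Ψ (σ.symm (v ⟨m, hm⟩)) v ∧ Agr m x (ψ v) ∧
          (ψ v) ⟨m, hm⟩ = σ.symm (v ⟨m, hm⟩) := by
        intro v hv
        have heq : ψ v = Ψ (σ.symm (v ⟨m, hm⟩)) v := by rw [hψdef]; simp only [if_pos hv]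
        have h1 : Agr (m + 1) (P (σ.symm (v ⟨m, hm⟩))) (Ψ (σ.symm (v ⟨m, hm⟩)) v) :=
          B2 _ v (hQv v hv)
        have h2 : Agr (m + 1) (Function.update x ⟨m, hm⟩ (σ.symm (v ⟨m, hm⟩)))
            (Ψ (σ.symm (v ⟨m, hm⟩)) v) := (hP _).trans h1
        obtain ⟨h3, h4⟩ := (agr_update_iff hm).1 h2
        exact ⟨heq, by rw [heq]; exact h3, by rw [heq]; exact h4⟩
      refine ⟨φ, ψ, ?_, ?_, ?_, ?_, ?_, ?_, ?_⟩
      · intro u hu; exact (himg u hu).2.1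
      · intro v hv; exact (hpre v hv).2.1
      · -- ψ ∘ φ = id on the ball
        intro u hu
        obtain ⟨heq, hyφ, hval⟩ := himg u hu
        obtain ⟨heq2, -, -⟩ := hpre (φ u) hyφ
        rw [heq2, hval, Equiv.symm_apply_apply, heq]
        exact B3 _ u (hPu u hu)
      · intro v hv
        obtain ⟨heq, hxψ, hval⟩ := hpre v hv
        obtain ⟨heq2, -, -⟩ := himg (ψ v) hxψ
        rw [heq2, hval, heq]
        exact B4 _ v (hQv v hv)
      · -- φ x = y
        have hx : Agr m x x := Agr.refl m x
        obtain ⟨heq, -, -⟩ := himg x hx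
        rw [heq]
        have := B5 (x ⟨m, hm⟩)
        rwa [hPa0, hQa0] at this
      · -- distances
        intro u u' hu hu'
        obtain ⟨heq, hyφ, hval⟩ := himg u hu
        obtain ⟨heq', hyφ', hval'⟩ := himg u' hu'
        by_cases hsame : u ⟨m, hm⟩ = u' ⟨m, hm⟩
        · rw [heq, heq', ← hsame]
          exact B6 _ u u' (hPu u hu) (by rw [hsame]; exact hPu u' hu')
        · have hd1 : treeDist u u' = n - m :=
            treeDist_eq_split hm (hu.symm.trans hu') hsame
          have hd2 : treeDist (φ u) (φ u') = n - m := by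
            apply treeDist_eq_split hm (hyφ.symm.trans hyφ')
            rw [hval, hval']
            exact fun hcon => hsame (σ.injective hcon)
          rw [hd1, hd2]
      · intro u hu
        obtain ⟨heq, -, -⟩ := himg u hu
        rw [heq]
        exact B7 _ u (hPu u hu)

end LemD

end Stmt15

/-- Let `𝓛 = {L_1,…,L_k}` be a lumping of the Insect Markov chain on `X^n`.
Then there is a subgroup `K` of the group of permutations of `X^n` preserving the ultrametric
distance `d` (i.e. of the automorphism group of the rooted `q`-ary tree of depth `n` acting on
its boundary) whose orbits on `X^n` are exactly the parts of `𝓛`. -/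
theorem stmt_15 {X : Type*} [Fintype X] {n k : ℕ}
    (hq : 2 ≤ Fintype.card X) (hn : 1 ≤ n)
    (L : Fin k → Finset (Fin n → X))
    (hL_nonempty : ∀ s, (L s).Nonempty)
    (hL_part : ∀ x : Fin n → X, ∃! s, x ∈ L s)
    (hlump : ∀ r s : Fin k, ∀ x ∈ L r, ∀ x' ∈ L r,
        ∑ y ∈ L s, insectP x y = ∑ y ∈ L s, insectP x' y) :
    ∃ K : Subgroup (Equiv.Perm (Fin n → X)),
      (∀ g ∈ K, ∀ x y : Fin n → X, treeDist (g x) (g y) = treeDist x y) ∧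
      (∀ x y : Fin n → X, (∃ g ∈ K, g x = y) ↔ ∃ s : Fin k, x ∈ L s ∧ y ∈ L s) := by
  classical
  have hcount : ∀ u w : Fin n → X, Stmt15.sameCol L u w → ∀ m, m ≤ n → ∀ s,
      ((Stmt15.ballm m u).filter (fun y => y ∈ L s)).card
        = ((Stmt15.ballm m w).filter (fun y => y ∈ L s)).card :=
    fun u w h m hm s => Stmt15.part1 hq hL_nonempty hL_part hlump h hm s
  refine ⟨{ carrier := setOf (fun g : Equiv.Perm (Fin n → X) =>
              (∀ x y, treeDist (g x) (g y) = treeDist x y) ∧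
                (∀ z, Stmt15.sameCol L (g z) z))
            mul_mem' := ?_
            one_mem' := ?_
            inv_mem' := ?_ }, ?_, ?_⟩
  · rintro g h ⟨hg1, hg2⟩ ⟨hh1, hh2⟩
    constructor
    · intro x y
      show treeDist (g (h x)) (g (h y)) = _
      rw [hg1, hh1]
    · intro z
      exact Stmt15.sameCol_trans (hg2 (h z)) (hh2 z)
  · constructor
    · intro x y; rfl
    · intro z; exact Stmt15.sameCol_refl L z
  · rintro g ⟨hg1, hg2⟩
    constructor
    · intro x y
      have := hg1 (g⁻¹ x) (g⁻¹ y)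
      rw [Equiv.Perm.inv_def, Equiv.apply_symm_apply, Equiv.apply_symm_apply] at this
      exact this.symm
    · intro z
      have := hg2 (g⁻¹ z)
      rw [Equiv.Perm.inv_def, Equiv.apply_symm_apply] at this
      exact Stmt15.sameCol_symm this
  · intro g hg x y
    exact hg.1 x y
  · intro x y
    constructor
    · rintro ⟨g, hg, rfl⟩
      obtain ⟨s, hs, -⟩ := hL_part x
      exact ⟨s, hs, (hg.2 x s).2 hs⟩
    · rintro ⟨s, hxs, hys⟩
      have hxy : Stmt15.sameCol L x y := Stmt15.sameCol_of_mem hL_part hxs hys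
      obtain ⟨φ, ψ, h1, h2, h3, h4, h5, h6, h7⟩ :=
        Stmt15.lemD hL_part hcount n le_rfl x y hxy
      have hzero : ∀ z w : Fin n → X, Stmt15.Agr (n - n) z w := by
        intro z w
        rw [Nat.sub_self]
        exact Stmt15.agr_zero z w
      refine ⟨⟨φ, ψ, fun u => h3 u (hzero x u), fun v => h4 v (hzero y v)⟩, ⟨?_, ?_⟩, h5⟩
      · intro u u'
        exact h6 u u' (hzero x u) (hzero x u')
      · intro z
        exact h7 z (hzero x z)
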